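/- (Combinatorial core of simultaneous balancing.) There exists a set P' with P ⊆ P' ⊆ {0, …, n−1} and |P'| ≤ (α+1)·r/(α−1) such that, setting Q' = {π(p) : p ∈ P'}, both balancing conditions hold simultaneously: (i) for every pair of consecutive elements q_s < q_e of Q' ∪ {n}, the weight of (q_s, q_e) with respect to P' is strictly less than 2α; and (ii) for every pair of consecutive elements p_s < p_e of P' ∪ {n}, the weight of (p_s, p_e) with respect to Q' is strictly less than 2α. Hence both π and π⁻¹ admit balanced move structures over a common refinement with at most 2r/(α−1) added intervals in total. -/

import Mathlib

namespace SimulBal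

def cnt (B : Finset ℕ) (a b : ℕ) : ℕ := (B.filter (fun x => a < x ∧ x < b)).card

def nxt (n : ℕ) (A : Finset ℕ) (q : ℕ) : ℕ :=
  if h : (((insert n A).filter (fun x => q < x)).Nonempty)
  then ((insert n A).filter (fun x => q < x)).min' h else n

section NXT
variable {n : ℕ} {A B : Finset ℕ} {q x y e : ℕ}


lemma nxt_ne (hq : q < n) : (((insert n A).filter (fun x => q < x)).Nonempty) :=
  ⟨n, by simp [hq]⟩

lemma nxt_eq_min' (hq : q < n) :
    nxt n A q = ((insert n A).filter (fun x => q < x)).min' (nxt_ne hq) :=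
  dif_pos _

lemma lt_nxt (hq : q < n) : q < nxt n A q := by
  rw [nxt_eq_min' hq]
  have := Finset.min'_mem _ (nxt_ne (A := A) hq)
  exact (Finset.mem_filter.1 this).2

lemma nxt_mem (hq : q < n) : nxt n A q ∈ insert n A := by
  rw [nxt_eq_min' hq]
  have := Finset.min'_mem _ (nxt_ne (A := A) hq)
  exact (Finset.mem_filter.1 this).1

lemma nxt_le (hq : q < n) (hx : x ∈ insert n A) (hqx : q < x) : nxt n A q ≤ x := by
  rw [nxt_eq_min' hq]
  exact Finset.min'_le _ _ (Finset.mem_filter.2 ⟨hx, hqx⟩)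

lemma nxt_le_n (hq : q < n) : nxt n A q ≤ n := nxt_le hq (Finset.mem_insert_self _ _) hq

lemma not_between (hq : q < n) (hx : x ∈ insert n A) : ¬ (q < x ∧ x < nxt n A q) := by
  rintro ⟨h1, h2⟩
  exact absurd (nxt_le hq hx h1) (by omega)

lemma nxt_of_consec (hq : q < n) (he : e ∈ insert n A) (hlt : q < e)
    (hb : ∀ x ∈ insert n A, ¬(q < x ∧ x < e)) : nxt n A q = e := by
  have h1 : nxt n A q ≤ e := nxt_le hq he hlt
  rcases lt_or_eq_of_le h1 with h | h
  · exact absurd ⟨lt_nxt hq, h⟩ (hb _ (nxt_mem hq))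
  · exact h


end NXT
section CNT
variable {B : Finset ℕ} {a b y : ℕ}


lemma cnt_split (hy : y ∈ B) (ha : a < y) (hb : y < b) :
    cnt B a y + 1 + cnt B y b = cnt B a b := by
  classical
  unfold cnt
  have h1 : B.filter (fun x => a < x ∧ x < b)
      = (B.filter (fun x => a < x ∧ x < y)) ∪ insert y (B.filter (fun x => y < x ∧ x < b)) := by
    ext x
    simp only [Finset.mem_union, Finset.mem_filter, Finset.mem_insert]
    constructor
    · rintro ⟨hxB, h2, h3⟩
      rcases lt_trichotomy x y with h | h | h
      · exact Or.inl ⟨hxB, h2, h⟩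
      · exact Or.inr (Or.inl h)
      · exact Or.inr (Or.inr ⟨hxB, h, h3⟩)
    · rintro (⟨hxB, h2, h3⟩ | h | ⟨hxB, h2, h3⟩)
      · exact ⟨hxB, h2, by omega⟩
      · subst h; exact ⟨hy, ha, hb⟩
      · exact ⟨hxB, by omega, h3⟩
  have hd : Disjoint (B.filter (fun x => a < x ∧ x < y))
      (insert y (B.filter (fun x => y < x ∧ x < b))) := by
    rw [Finset.disjoint_left]
    intro x hx hx'
    simp only [Finset.mem_filter] at hx
    simp only [Finset.mem_insert, Finset.mem_filter] at hx'
    omega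
  have hy' : y ∉ B.filter (fun x => y < x ∧ x < b) := by
    simp
  rw [h1, Finset.card_union_of_disjoint hd, Finset.card_insert_of_notMem hy']
  omega

lemma cnt_split_le (ha : a < y) (hb : y < b) :
    cnt B a y + cnt B y b ≤ cnt B a b := by
  classical
  by_cases hy : y ∈ B
  · have := cnt_split hy ha hb; omega
  · have h1 : cnt B a y + cnt B y b = cnt B a b := by
      unfold cnt
      have h1 : B.filter (fun x => a < x ∧ x < b)
          = (B.filter (fun x => a < x ∧ x < y)) ∪ (B.filter (fun x => y < x ∧ x < b)) := by
        ext x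
        simp only [Finset.mem_union, Finset.mem_filter]
        constructor
        · rintro ⟨hxB, h2, h3⟩
          rcases lt_trichotomy x y with h | h | h
          · exact Or.inl ⟨hxB, h2, h⟩
          · exact absurd (h ▸ hxB) hy
          · exact Or.inr ⟨hxB, h, h3⟩
        · rintro (⟨hxB, h2, h3⟩ | ⟨hxB, h2, h3⟩)
          · exact ⟨hxB, h2, by omega⟩
          · exact ⟨hxB, by omega, h3⟩
      have hd : Disjoint (B.filter (fun x => a < x ∧ x < y))
          (B.filter (fun x => y < x ∧ x < b)) := by
        rw [Finset.disjoint_left]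
        intro x hx hx'
        simp only [Finset.mem_filter] at hx hx'
        omega
      rw [h1, Finset.card_union_of_disjoint hd]
    omega

lemma cnt_insert_le (z : ℕ) : cnt (insert z B) a b ≤ cnt B a b + if a < z ∧ z < b then 1 else 0 := by
  classical
  unfold cnt
  by_cases hz : z ∈ B
  · rw [Finset.insert_eq_self.2 hz]; split <;> omega
  · rw [Finset.filter_insert]
    by_cases h : a < z ∧ z < b
    · rw [if_pos h, if_pos h, Finset.card_insert_of_notMem (by simp [hz])]
    · rw [if_neg h, if_neg h]
      omega

lemma cnt_insert_of_not_between (z : ℕ) (h : ¬ (a < z ∧ z < b)) :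
    cnt (insert z B) a b = cnt B a b := by
  classical
  unfold cnt
  rw [Finset.filter_insert, if_neg h]

lemma exists_kth (F : Finset ℕ) (k : ℕ) (h : k < F.card) :
    ∃ y ∈ F, (F.filter (· < y)).card = k := by
  classical
  induction k with
  | zero =>
    have hne : F.Nonempty := Finset.card_pos.1 (by omega)
    refine ⟨F.min' hne, F.min'_mem hne, ?_⟩
    rw [Finset.card_eq_zero, Finset.filter_eq_empty_iff]
    intro x hx
    have := F.min'_le x hx
    omega
  | succ k ih =>
    obtain ⟨y, hyF, hy⟩ := ih (by omega)
    have hsplit : F.card = (F.filter (· < y)).card + (F.filter (y < ·)).card + 1 := by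
      have h1 : F = (F.filter (· < y)) ∪ insert y (F.filter (y < ·)) := by
        ext x
        simp only [Finset.mem_union, Finset.mem_filter, Finset.mem_insert]
        constructor
        · intro hx
          rcases lt_trichotomy x y with h | h | h
          · exact Or.inl ⟨hx, h⟩
          · exact Or.inr (Or.inl h)
          · exact Or.inr (Or.inr ⟨hx, h⟩)
        · rintro (⟨hx, _⟩ | rfl | ⟨hx, _⟩) <;> first | exact hx | exact hyF
      have hd : Disjoint (F.filter (· < y)) (insert y (F.filter (y < ·))) := by
        rw [Finset.disjoint_left]
        intro x hx hx'
        simp only [Finset.mem_filter] at hx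
        simp only [Finset.mem_insert, Finset.mem_filter] at hx'
        omega
      conv_lhs => rw [h1]
      rw [Finset.card_union_of_disjoint hd, Finset.card_insert_of_notMem (by simp)]
      omega
    have hG : (F.filter (y < ·)).Nonempty := by
      rw [← Finset.card_pos]; omega
    set y' := (F.filter (y < ·)).min' hG with hy'def
    have hy'mem := (F.filter (y < ·)).min'_mem hG
    rw [Finset.mem_filter] at hy'mem
    refine ⟨y', hy'mem.1, ?_⟩
    have heq : F.filter (· < y') = insert y (F.filter (· < y)) := by
      ext x
      simp only [Finset.mem_filter, Finset.mem_insert]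
      constructor
      · rintro ⟨hx, hlt⟩
        rcases lt_trichotomy x y with h | h | h
        · exact Or.inr ⟨hx, h⟩
        · exact Or.inl h
        · exfalso
          have : y' ≤ x := Finset.min'_le _ _ (Finset.mem_filter.2 ⟨hx, h⟩)
          omega
      · rintro (rfl | ⟨hx, h⟩)
        · exact ⟨hyF, hy'mem.2⟩
        · exact ⟨hx, by omega⟩
    rw [heq, Finset.card_insert_of_notMem (by simp), hy]

end CNT
section PHI
variable {n : ℕ} {A B : Finset ℕ} {q x y e z q0 : ℕ}
def phi1 (n α : ℕ) (A B : Finset ℕ) : ℕ := ∑ q ∈ A, (cnt B q (nxt n A q) - α)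

lemma phi1_insert_eq {α : ℕ} (hA : ∀ a ∈ A, a < n) (hq0 : q0 ∈ A) (h1 : q0 < y)
    (h2 : y < nxt n A q0) (hyn : y < n) :
    phi1 n α (insert y A) B + (cnt B q0 (nxt n A q0) - α)
      = phi1 n α A B + ((cnt B q0 y - α) + (cnt B y (nxt n A q0) - α)) := by
  classical
  have hq0n : q0 < n := hA q0 hq0
  have hyA : y ∉ A := fun h => not_between hq0n (Finset.mem_insert_of_mem h) ⟨h1, h2⟩
  have hii : nxt n (insert y A) q0 = y := by
    apply nxt_of_consec hq0n (by simp) h1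
    intro x hx hbet
    obtain ⟨hb1, hb2⟩ := hbet
    rcases Finset.mem_insert.1 hx with rfl | hx
    · omega
    rcases Finset.mem_insert.1 hx with rfl | hx
    · omega
    · exact not_between hq0n (Finset.mem_insert_of_mem hx) ⟨hb1, hb2.trans h2⟩
  have hiii : nxt n (insert y A) y = nxt n A q0 := by
    apply nxt_of_consec hyn ?_ h2
    · intro x hx hbet
      obtain ⟨hb1, hb2⟩ := hbet
      rcases Finset.mem_insert.1 hx with rfl | hx
      · have := nxt_le_n (A := A) hq0n; omega
      rcases Finset.mem_insert.1 hx with rfl | hx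
      · omega
      · exact not_between hq0n (Finset.mem_insert_of_mem hx) ⟨h1.trans hb1, hb2⟩
    · rcases Finset.mem_insert.1 (nxt_mem (A := A) hq0n) with h | h
      · rw [h]; exact Finset.mem_insert_self _ _
      · exact Finset.mem_insert_of_mem (Finset.mem_insert_of_mem h)
  have hi : ∀ a ∈ A.erase q0, nxt n (insert y A) a = nxt n A a := by
    intro a ha
    have haq0 : a ≠ q0 := Finset.ne_of_mem_erase ha
    have haA : a ∈ A := Finset.mem_of_mem_erase ha
    have han : a < n := hA a haA
    apply nxt_of_consec han
    · rcases Finset.mem_insert.1 (nxt_mem (A := A) han) with h | h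
      · rw [h]; exact Finset.mem_insert_self _ _
      · exact Finset.mem_insert_of_mem (Finset.mem_insert_of_mem h)
    · exact lt_nxt han
    · intro x hx hbet
      obtain ⟨hb1, hb2⟩ := hbet
      rcases Finset.mem_insert.1 hx with rfl | hx
      · have := nxt_le_n (A := A) han; omega
      rcases Finset.mem_insert.1 hx with rfl | hx
      · rcases lt_or_gt_of_ne haq0 with h | h
        · have := nxt_le han (Finset.mem_insert_of_mem hq0) h
          omega
        · have := nxt_le hq0n (Finset.mem_insert_of_mem haA) h
          omega
      · exact not_between han (Finset.mem_insert_of_mem hx) ⟨hb1, hb2⟩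
  have hsum1 : phi1 n α (insert y A) B
      = ((cnt B q0 y - α) + (cnt B y (nxt n A q0) - α))
        + ∑ a ∈ A.erase q0, (cnt B a (nxt n A a) - α) := by
    unfold phi1
    rw [Finset.sum_insert hyA, hiii,
      ← Finset.add_sum_erase A (fun a => cnt B a (nxt n (insert y A) a) - α) hq0, hii,
      Finset.sum_congr rfl (fun a ha => by rw [hi a ha] :
        ∀ a ∈ A.erase q0, cnt B a (nxt n (insert y A) a) - α = cnt B a (nxt n A a) - α)]
    ring
  have hsum2 : phi1 n α A B
      = (cnt B q0 (nxt n A q0) - α) + ∑ a ∈ A.erase q0, (cnt B a (nxt n A a) - α) := by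
    unfold phi1
    rw [← Finset.add_sum_erase A (fun a => cnt B a (nxt n A a) - α) hq0]
  omega

lemma phi1_insert_le {α : ℕ} (hA : ∀ a ∈ A, a < n) (h0 : 0 ∈ A) (hy : y ∉ A) (hyn : y < n)
    (hy0 : 0 < y) :
    phi1 n α (insert y A) B ≤ phi1 n α A B := by
  classical
  have hne : (A.filter (· < y)).Nonempty := ⟨0, Finset.mem_filter.2 ⟨h0, hy0⟩⟩
  obtain ⟨q0, hq0A, hq0y, hmax⟩ : ∃ q0, q0 ∈ A ∧ q0 < y ∧ ∀ a ∈ A, a < y → a ≤ q0 := by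
    refine ⟨(A.filter (· < y)).max' hne, ?_, ?_, ?_⟩
    · exact (Finset.mem_filter.1 ((A.filter (· < y)).max'_mem hne)).1
    · exact (Finset.mem_filter.1 ((A.filter (· < y)).max'_mem hne)).2
    · intro a ha hay
      exact Finset.le_max' (A.filter (· < y)) a (Finset.mem_filter.2 ⟨ha, hay⟩)
  have h2 : y < nxt n A q0 := by
    rcases lt_or_ge y (nxt n A q0) with h | h
    · exact h
    exfalso
    have hmem := nxt_mem (A := A) (hA q0 hq0A)
    have hlt := lt_nxt (A := A) (hA q0 hq0A)
    rcases Finset.mem_insert.1 hmem with hn | hA'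
    · omega
    · have hne' : nxt n A q0 ≠ y := fun hh => hy (hh ▸ hA')
      have : nxt n A q0 ≤ q0 := hmax _ hA' (by omega)
      omega
  have heq := phi1_insert_eq (B := B) (α := α) hA hq0A hq0y h2 hyn
  have hle := cnt_split_le (B := B) (a := q0) (b := nxt n A q0) hq0y h2
  omega

lemma phi1_insert_heavy {α : ℕ} (hA : ∀ a ∈ A, a < n) (hq0 : q0 ∈ A) (hyB : y ∈ B)
    (h1 : q0 < y) (h2 : y < nxt n A q0) (hyn : y < n)
    (hcnt : cnt B q0 y = α) (hw : 2*α ≤ cnt B q0 (nxt n A q0)) :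
    phi1 n α (insert y A) B + α ≤ phi1 n α A B := by
  have heq := phi1_insert_eq (B := B) (α := α) hA hq0 h1 h2 hyn
  have hsp := cnt_split (B := B) hyB h1 h2
  omega

lemma phi1_insert_B_le {α : ℕ} (hA : ∀ a ∈ A, a < n) (z : ℕ) :
    phi1 n α A (insert z B) ≤ phi1 n α A B + 1 := by
  classical
  have key : ∀ q ∈ A, cnt (insert z B) q (nxt n A q) - α
      ≤ (cnt B q (nxt n A q) - α) + (if q < z ∧ z < nxt n A q then 1 else 0) := by
    intro q hq
    have h := cnt_insert_le (B := B) z (a := q) (b := nxt n A q)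
    by_cases hc : q < z ∧ z < nxt n A q
    · rw [if_pos hc] at h ⊢; omega
    · rw [if_neg hc] at h ⊢; omega
  have hcard : (A.filter (fun q => q < z ∧ z < nxt n A q)).card ≤ 1 := by
    apply Finset.card_le_one.2
    intro q1 h1 q2 h2
    simp only [Finset.mem_filter] at h1 h2
    by_contra hne
    rcases lt_or_gt_of_ne hne with h | h
    · have := nxt_le (hA _ h1.1) (Finset.mem_insert_of_mem h2.1) h; omega
    · have := nxt_le (hA _ h2.1) (Finset.mem_insert_of_mem h1.1) h; omega
  calc phi1 n α A (insert z B)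
      ≤ ∑ q ∈ A, ((cnt B q (nxt n A q) - α) + (if q < z ∧ z < nxt n A q then 1 else 0)) :=
        Finset.sum_le_sum key
    _ = phi1 n α A B + ∑ q ∈ A, (if q < z ∧ z < nxt n A q then 1 else 0) := by
        rw [Finset.sum_add_distrib]; rfl
    _ ≤ phi1 n α A B + 1 := by
        have : ∑ q ∈ A, (if q < z ∧ z < nxt n A q then 1 else 0)
            = (A.filter (fun q => q < z ∧ z < nxt n A q)).card := by
          rw [Finset.sum_ite, Finset.sum_const, Finset.sum_const, smul_eq_mul, smul_eq_mul,
            mul_one, mul_zero, add_zero]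
        omega

lemma phi1_insert_B_eq {α : ℕ} (hA : ∀ a ∈ A, a < n) (hz : z ∈ A) :
    phi1 n α A (insert z B) = phi1 n α A B := by
  apply Finset.sum_congr rfl
  intro q hq
  rw [cnt_insert_of_not_between z (not_between (hA q hq) (Finset.mem_insert_of_mem hz))]

lemma phi1_le_card {α : ℕ} (hA : ∀ a ∈ A, a < n) : phi1 n α A B ≤ B.card := by
  classical
  calc phi1 n α A B ≤ ∑ q ∈ A, cnt B q (nxt n A q) :=
        Finset.sum_le_sum (fun q _ => Nat.sub_le _ _)
    _ = (A.biUnion (fun q => B.filter (fun x => q < x ∧ x < nxt n A q))).card := by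
        rw [Finset.card_biUnion]
        · rfl
        · intro q1 h1 q2 h2 hne
          rw [Function.onFun, Finset.disjoint_left]
          intro x hx1 hx2
          simp only [Finset.mem_filter] at hx1 hx2
          rcases lt_or_gt_of_ne hne with h | h
          · have := nxt_le (hA _ h1) (Finset.mem_insert_of_mem h2) h; omega
          · have := nxt_le (hA _ h2) (Finset.mem_insert_of_mem h1) h; omega
    _ ≤ B.card := Finset.card_le_card (by
        intro x hx
        rcases Finset.mem_biUnion.1 hx with ⟨q, _, hq⟩
        exact (Finset.mem_filter.1 hq).1)


end PHI

def phi (n a : ℕ) (f : ℕ → ℕ) (S : Finset ℕ) : ℕ :=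
  phi1 n a (S.image f) S + phi1 n a S (S.image f)

def balanced (n a : ℕ) (f : ℕ → ℕ) (S : Finset ℕ) : Prop :=
  (∀ q ∈ S.image f, cnt S q (nxt n (S.image f) q) < 2*a) ∧
  (∀ p ∈ S, cnt (S.image f) p (nxt n S p) < 2*a)

lemma step {n a : ℕ} {f : ℕ → ℕ} {S : Finset ℕ}
    (hπ : Set.BijOn f (Set.Iio n) (Set.Iio n)) (hS : ∀ p ∈ S, p < n) (h0S : 0 ∈ S)
    (h0T : 0 ∈ S.image f) (hα : 2 ≤ a) (hnb : ¬ balanced n a f S) :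
    ∃ w, w ∉ S ∧ w < n ∧ phi n a f (insert w S) + a ≤ phi n a f S + 1 := by
  classical
  have hT : ∀ t ∈ S.image f, t < n := by
    intro t ht
    obtain ⟨s, hs, rfl⟩ := Finset.mem_image.1 ht
    exact hπ.mapsTo (Set.mem_Iio.2 (hS s hs))
  rw [balanced, not_and_or] at hnb
  push_neg at hnb
  rcases hnb with ⟨q0, hq0, hw⟩ | ⟨q0, hq0, hw⟩
  · -- output-heavy gap
    set T := S.image f with hTdef
    set e := nxt n T q0 with hedef
    have hq0n : q0 < n := hT q0 hq0
    have hFcard : (S.filter (fun x => q0 < x ∧ x < e)).card = cnt S q0 e := rfl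
    obtain ⟨y, hyF, hy⟩ := exists_kth (S.filter (fun x => q0 < x ∧ x < e)) a
      (by rw [hFcard]; unfold cnt at hw ⊢; omega)
    rw [Finset.mem_filter] at hyF
    obtain ⟨hyS, hqy, hye⟩ := hyF
    have hyn : y < n := hS y hyS
    have hcnt : cnt S q0 y = a := by
      rw [← hy]
      unfold cnt
      congr 1
      rw [Finset.filter_filter]
      ext x
      simp only [Finset.mem_filter]
      constructor
      · rintro ⟨hxS, h1, h2⟩
        exact ⟨hxS, ⟨h1, by omega⟩, h2⟩
      · rintro ⟨hxS, ⟨h1, _⟩, h2⟩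
        exact ⟨hxS, h1, h2⟩
    have hyT : y ∉ T := fun h =>
      not_between hq0n (Finset.mem_insert_of_mem h) ⟨hqy, hye⟩
    obtain ⟨z, hz, hzy⟩ := hπ.surjOn (Set.mem_Iio.2 hyn)
    have hzn : z < n := Set.mem_Iio.1 hz
    have hzS : z ∉ S := fun h => hyT (Finset.mem_image.2 ⟨z, h, hzy⟩)
    refine ⟨z, hzS, hzn, ?_⟩
    have himg : (insert z S).image f = insert y T := by
      rw [Finset.image_insert, hzy]
    unfold phi
    rw [himg, ← hTdef]
    have hAin : ∀ t ∈ insert y T, t < n := by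
      intro t ht
      rcases Finset.mem_insert.1 ht with rfl | ht
      · exact hyn
      · exact hT t ht
    have hb1 : phi1 n a (insert y T) (insert z S) ≤ phi1 n a (insert y T) S + 1 :=
      phi1_insert_B_le hAin z
    have hb2 : phi1 n a (insert y T) S + a ≤ phi1 n a T S :=
      phi1_insert_heavy hT hq0 hyS hqy hye hyn hcnt hw
    have hb3 : phi1 n a (insert z S) (insert y T) = phi1 n a (insert z S) T :=
      phi1_insert_B_eq (by
        intro p hp
        rcases Finset.mem_insert.1 hp with rfl | hp
        · exact hzn
        · exact hS p hp) (Finset.mem_insert_of_mem hyS)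
    have hb4 : phi1 n a (insert z S) T ≤ phi1 n a S T :=
      phi1_insert_le hS h0S hzS hzn (by
        rcases Nat.eq_zero_or_pos z with rfl | h
        · exact absurd h0S hzS
        · exact h)
    omega
  · -- input-heavy gap
    set T := S.image f with hTdef
    set e := nxt n S q0 with hedef
    have hq0n : q0 < n := hS q0 hq0
    have hFcard : (T.filter (fun x => q0 < x ∧ x < e)).card = cnt T q0 e := rfl
    obtain ⟨y, hyF, hy⟩ := exists_kth (T.filter (fun x => q0 < x ∧ x < e)) a
      (by rw [hFcard]; unfold cnt at hw ⊢; omega)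
    rw [Finset.mem_filter] at hyF
    obtain ⟨hyT, hqy, hye⟩ := hyF
    have hyn : y < n := hT y hyT
    have hcnt : cnt T q0 y = a := by
      rw [← hy]
      unfold cnt
      congr 1
      rw [Finset.filter_filter]
      ext x
      simp only [Finset.mem_filter]
      constructor
      · rintro ⟨hxS, h1, h2⟩
        exact ⟨hxS, ⟨h1, by omega⟩, h2⟩
      · rintro ⟨hxS, ⟨h1, _⟩, h2⟩
        exact ⟨hxS, h1, h2⟩
    have hyS : y ∉ S := fun h =>
      not_between hq0n (Finset.mem_insert_of_mem h) ⟨hqy, hye⟩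
    have hfyn : f y < n := Set.mem_Iio.1 (hπ.mapsTo (Set.mem_Iio.2 hyn))
    have hfyT : f y ∉ T := by
      intro h
      obtain ⟨s, hs, hfs⟩ := Finset.mem_image.1 h
      have : y = s := hπ.injOn (Set.mem_Iio.2 hyn) (Set.mem_Iio.2 (hS s hs)) hfs.symm
      exact hyS (this ▸ hs)
    refine ⟨y, hyS, hyn, ?_⟩
    have himg : (insert y S).image f = insert (f y) T := by
      rw [Finset.image_insert]
    unfold phi
    rw [himg, ← hTdef]
    have hAin : ∀ p ∈ insert y S, p < n := by
      intro p hp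
      rcases Finset.mem_insert.1 hp with rfl | hp
      · exact hyn
      · exact hS p hp
    have hb1 : phi1 n a (insert y S) (insert (f y) T) ≤ phi1 n a (insert y S) T + 1 :=
      phi1_insert_B_le hAin (f y)
    have hb2 : phi1 n a (insert y S) T + a ≤ phi1 n a S T :=
      phi1_insert_heavy hS hq0 hyT hqy hye hyn hcnt hw
    have hAout : ∀ t ∈ insert (f y) T, t < n := by
      intro t ht
      rcases Finset.mem_insert.1 ht with rfl | ht
      · exact hfyn
      · exact hT t ht
    have hb3 : phi1 n a (insert (f y) T) (insert y S) = phi1 n a (insert (f y) T) S :=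
      phi1_insert_B_eq hAout (Finset.mem_insert_of_mem hyT)
    have hb4 : phi1 n a (insert (f y) T) S ≤ phi1 n a T S :=
      phi1_insert_le hT h0T hfyT hfyn (by
        rcases Nat.eq_zero_or_pos (f y) with h | h
        · exact absurd (h ▸ h0T) hfyT
        · exact h)
    omega

lemma recurse {n a : ℕ} {f : ℕ → ℕ}
    (hπ : Set.BijOn f (Set.Iio n) (Set.Iio n)) (hα : 2 ≤ a) :
    ∀ m (S : Finset ℕ), (∀ p ∈ S, p < n) → 0 ∈ S → 0 ∈ S.image f → phi n a f S ≤ m →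
    ∃ S', S ⊆ S' ∧ (∀ p ∈ S', p < n) ∧ balanced n a f S' ∧
      (S'.card - S.card) * (a - 1) + phi n a f S' ≤ phi n a f S := by
  intro m
  induction m with
  | zero =>
    intro S hS h0S h0T hphi
    by_cases hb : balanced n a f S
    · exact ⟨S, subset_rfl, hS, hb, by simp⟩
    · obtain ⟨z, hzS, hzn, hstep⟩ := step hπ hS h0S h0T hα hb
      omega
  | succ m ih =>
    intro S hS h0S h0T hphi
    by_cases hb : balanced n a f S
    · exact ⟨S, subset_rfl, hS, hb, by simp⟩
    · obtain ⟨z, hzS, hzn, hstep⟩ := step hπ hS h0S h0T hα hb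
      have hS1 : ∀ p ∈ insert z S, p < n := by
        intro p hp
        rcases Finset.mem_insert.1 hp with rfl | hp
        · exact hzn
        · exact hS p hp
      obtain ⟨S', hsub, hS'n, hbal, hcard⟩ := ih (insert z S) hS1
        (Finset.mem_insert_of_mem h0S)
        (Finset.image_subset_image (Finset.subset_insert _ _) h0T) (by omega)
      refine ⟨S', (Finset.subset_insert _ _).trans hsub, hS'n, hbal, ?_⟩
      have hc1 : (insert z S).card = S.card + 1 := Finset.card_insert_of_notMem hzS
      have hc2 : (insert z S).card ≤ S'.card := Finset.card_le_card hsub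
      have hk : S'.card - S.card = (S'.card - (insert z S).card) + 1 := by omega
      rw [hk, add_mul, one_mul]
      omega

end SimulBal

open SimulBal in
/-- combinatorial core of simultaneous balancing: there exists
`P' ⊇ P` inside `{0,…,n−1}` with `|P'| ≤ (α+1)·r/(α−1)` — at most `2r/(α−1)`
added intervals in total — such that, with `Q' = π(P')`, both balancing
conditions hold: every gap of `Q' ∪ {n}` has weight `< 2α` w.r.t. `P'`, and
every gap of `P' ∪ {n}` has weight `< 2α` w.r.t. `Q'`. Hence both `π` and
`π⁻¹` admit balanced move structures over a common refinement. -/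
theorem simultaneous_balancing_exists
    (n : ℕ) (hn : 1 ≤ n) (π : ℕ → ℕ)
    (hπ : Set.BijOn π (Set.Iio n) (Set.Iio n))
    (P : Finset ℕ)
    (hP : P = (Finset.range n).filter (fun i => i = 0 ∨ π i ≠ π (i - 1) + 1))
    (α : ℕ) (hα : 2 ≤ α) :
    ∃ P' : Finset ℕ, P ⊆ P' ∧ (∀ p ∈ P', p < n) ∧
      P'.card * (α - 1) ≤ (α + 1) * P.card ∧
      (P'.card - P.card) * (α - 1) ≤ 2 * P.card ∧
      (∀ qs ∈ insert n (P'.image π), ∀ qe ∈ insert n (P'.image π), qs < qe →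
        (∀ x ∈ insert n (P'.image π), ¬(qs < x ∧ x < qe)) →
        (P'.filter (fun p => qs < p ∧ p < qe)).card < 2 * α) ∧
      (∀ ps ∈ insert n P', ∀ pe ∈ insert n P', ps < pe →
        (∀ x ∈ insert n P', ¬(ps < x ∧ x < pe)) →
        ((P'.image π).filter (fun q => ps < q ∧ q < pe)).card < 2 * α) := by
  classical
  have h0P : 0 ∈ P := by
    rw [hP]
    exact Finset.mem_filter.2 ⟨Finset.mem_range.2 hn, Or.inl rfl⟩
  have hPn : ∀ p ∈ P, p < n := by
    intro p hp
    rw [hP] at hp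
    exact Finset.mem_range.1 (Finset.mem_filter.1 hp).1
  have h0T : 0 ∈ P.image π := by
    obtain ⟨p, hp, hfp⟩ := hπ.surjOn (Set.mem_Iio.2 (by omega : (0:ℕ) < n))
    have hpn : p < n := Set.mem_Iio.1 hp
    have hpP : p ∈ P := by
      rw [hP]
      refine Finset.mem_filter.2 ⟨Finset.mem_range.2 hpn, ?_⟩
      by_cases hp0 : p = 0
      · exact Or.inl hp0
      · right
        rw [hfp]
        exact fun h => Nat.succ_ne_zero _ h.symm
    exact Finset.mem_image.2 ⟨p, hpP, hfp⟩
  have hTn : ∀ t ∈ P.image π, t < n := by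
    intro t ht
    obtain ⟨s, hs, rfl⟩ := Finset.mem_image.1 ht
    exact hπ.mapsTo (Set.mem_Iio.2 (hPn s hs))
  have hphi0 : phi n α π P ≤ 2 * P.card := by
    unfold phi
    have h1 : phi1 n α (P.image π) P ≤ P.card := phi1_le_card hTn
    have h2 : phi1 n α P (P.image π) ≤ (P.image π).card := phi1_le_card hPn
    have h3 := Finset.card_image_le (s := P) (f := π)
    omega
  obtain ⟨P', hsub, hP'n, hbal, hcard⟩ :=
    recurse hπ hα (phi n α π P) P hPn h0P h0T le_rfl
  have hcc : P.card ≤ P'.card := Finset.card_le_card hsub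
  have hkey : (P'.card - P.card) * (α - 1) ≤ 2 * P.card := by omega
  have hT' : ∀ t ∈ P'.image π, t < n := by
    intro t ht
    obtain ⟨s, hs, rfl⟩ := Finset.mem_image.1 ht
    exact hπ.mapsTo (Set.mem_Iio.2 (hP'n s hs))
  refine ⟨P', hsub, hP'n, ?_, hkey, ?_, ?_⟩
  · -- first cardinality bound
    have e1 : P'.card = P.card + (P'.card - P.card) := by omega
    rw [e1, add_mul]
    have e2 : (α + 1) * P.card = P.card * (α - 1) + 2 * P.card := by
      obtain ⟨b, rfl⟩ : ∃ b, α = b + 2 := ⟨α - 2, by omega⟩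
      have hb : b + 2 - 1 = b + 1 := rfl
      rw [hb]
      ring
    rw [e2]
    exact Nat.add_le_add_left hkey _
  · intro qs hqs qe hqe hlt hgap
    rcases Finset.mem_insert.1 hqs with rfl | hqs
    · exfalso
      rcases Finset.mem_insert.1 hqe with rfl | hqe
      · omega
      · have := hT' qe hqe
        omega
    · have he : nxt n (P'.image π) qs = qe := nxt_of_consec (hT' qs hqs) hqe hlt hgap
      have hcnt := hbal.1 qs hqs
      rw [he] at hcnt
      exact hcnt
  · intro ps hps pe hpe hlt hgap
    rcases Finset.mem_insert.1 hps with rfl | hps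
    · exfalso
      rcases Finset.mem_insert.1 hpe with rfl | hpe
      · omega
      · have := hP'n pe hpe
        omega
    · have he : nxt n P' ps = pe := nxt_of_consec (hP'n ps hps) hpe hlt hgap
      have hcnt := hbal.2 ps hps
      rw [he] at hcnt
      exact hcnt
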